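/- Given paired samples (x_i, x̃_i), i = 1,...,n, with means x̄ = (1/n)Σ x_i and x̃̄ = (1/n)Σ x̃_i, and a similarity s_{ij} = ⟨G x_i, G̃ x̃_j⟩, the contrastive objective (1/(2n(n−1))) Σ_i [Σ_{j≠i}(s_{ij} − s_{ii}) + Σ_{j≠i}(s_{ji} − s_{ii})] equals −Tr(G S_n G̃ᵀ), where S_n = (1/(n−1)) Σ_i (x_i − x̄)(x̃_i − x̃̄)ᵀ is the empirical cross-covariance. -/

import Mathlib

open Matrix

lemma mulVec_sum' {n r d : ℕ} (G : Matrix (Fin r) (Fin d) ℝ) (x : Fin n → Fin d → ℝ) :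
    G.mulVec (∑ i, x i) = ∑ i, G.mulVec (x i) := by
  ext k
  simp [mulVec, dotProduct, Finset.sum_apply, Finset.mul_sum]
  rw [Finset.sum_comm]

lemma dotProduct_sum' {n r : ℕ} (v : Fin r → ℝ) (w : Fin n → Fin r → ℝ) :
    v ⬝ᵥ (∑ i, w i) = ∑ i, v ⬝ᵥ w i := by
  simp [dotProduct, Finset.sum_apply, Finset.mul_sum]
  rw [Finset.sum_comm]

lemma sum_dotProduct' {n r : ℕ} (v : Fin r → ℝ) (w : Fin n → Fin r → ℝ) :
    (∑ i, w i) ⬝ᵥ v = ∑ i, w i ⬝ᵥ v := by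
  simp [dotProduct, Finset.sum_apply, Finset.sum_mul]
  rw [Finset.sum_comm]

lemma trace_conj' {r d dt : ℕ} (G : Matrix (Fin r) (Fin d) ℝ)
    (Gt : Matrix (Fin r) (Fin dt) ℝ) (u : Fin d → ℝ) (v : Fin dt → ℝ) :
    (G * vecMulVec u v * Gt.transpose).trace = G.mulVec u ⬝ᵥ Gt.mulVec v := by
  rw [vecMulVec_eq Unit u v, show G * (replicateCol Unit u * replicateRow Unit v) * Gt.transpose
      = (G * replicateCol Unit u) * (replicateRow Unit v * Gt.transpose) by simp only [Matrix.mul_assoc]]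
  rw [trace_mul_comm]
  simp only [trace, diag, mul_apply, mulVec, dotProduct, Finset.mul_sum, Finset.sum_mul,
    transpose_apply, replicateCol_apply, replicateRow_apply, Finset.univ_unique, Finset.sum_const,
    Finset.card_singleton, one_smul]
  refine Finset.sum_congr rfl fun k _ => ?_
  rw [Finset.sum_comm]
  exact Finset.sum_congr rfl fun a _ => Finset.sum_congr rfl fun b _ => by ring

/-- The full-batch linear contrastive objective equals `−Tr(G Sₙ G̃ᵀ)`, where `Sₙ` is the
empirical cross-covariance of the paired samples. -/
theorem contrastive_loss_eq_neg_trace (n d dt r : ℕ) (hn : 2 ≤ n)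
    (x : Fin n → Fin d → ℝ) (xt : Fin n → Fin dt → ℝ)
    (G : Matrix (Fin r) (Fin d) ℝ) (Gt : Matrix (Fin r) (Fin dt) ℝ)
    (s : Fin n → Fin n → ℝ)
    (hs : ∀ i j, s i j = G.mulVec (x i) ⬝ᵥ Gt.mulVec (xt j))
    (xbar : Fin d → ℝ) (hxbar : xbar = (n : ℝ)⁻¹ • ∑ i, x i)
    (xtbar : Fin dt → ℝ) (hxtbar : xtbar = (n : ℝ)⁻¹ • ∑ i, xt i)
    (Sn : Matrix (Fin d) (Fin dt) ℝ)
    (hSn : Sn = ((n : ℝ) - 1)⁻¹ • ∑ i, vecMulVec (x i - xbar) (xt i - xtbar)) :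
    (2 * (n : ℝ) * ((n : ℝ) - 1))⁻¹ *
        (∑ i, ((∑ j ∈ Finset.univ.erase i, (s i j - s i i)) +
               ∑ j ∈ Finset.univ.erase i, (s j i - s i i)))
      = -(G * Sn * Gt.transpose).trace := by
  have hn2 : (2 : ℝ) ≤ (n : ℝ) := by exact_mod_cast hn
  have hn0 : (n : ℝ) ≠ 0 := by linarith
  have hn1 : (n : ℝ) - 1 ≠ 0 := by linarith
  set A := ∑ i, ∑ j, s i j with hA
  set D := ∑ i, s i i with hD
  have hAc : ∑ i, ∑ j, s j i = A := by rw [Finset.sum_comm]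
  -- the LHS sum
  have h1 : ∀ i : Fin n, ∑ j ∈ Finset.univ.erase i, (s i j - s i i)
      = (∑ j, s i j) - (n : ℝ) * s i i := by
    intro i
    rw [Finset.sum_sub_distrib, Finset.sum_erase_eq_sub (Finset.mem_univ i), Finset.sum_const,
      Finset.card_erase_of_mem (Finset.mem_univ i), Finset.card_univ, Fintype.card_fin,
      nsmul_eq_mul, Nat.cast_sub (by omega : 1 ≤ n)]
    push_cast
    ring
  have h2 : ∀ i : Fin n, ∑ j ∈ Finset.univ.erase i, (s j i - s i i)
      = (∑ j, s j i) - (n : ℝ) * s i i := by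
    intro i
    rw [Finset.sum_sub_distrib, Finset.sum_erase_eq_sub (Finset.mem_univ i), Finset.sum_const,
      Finset.card_erase_of_mem (Finset.mem_univ i), Finset.card_univ, Fintype.card_fin,
      nsmul_eq_mul, Nat.cast_sub (by omega : 1 ≤ n)]
    push_cast
    ring
  have hL : ∑ i, ((∑ j ∈ Finset.univ.erase i, (s i j - s i i)) +
               ∑ j ∈ Finset.univ.erase i, (s j i - s i i))
      = 2 * A - 2 * (n : ℝ) * D := by
    have : ∀ i : Fin n, (∑ j ∈ Finset.univ.erase i, (s i j - s i i)) +
               ∑ j ∈ Finset.univ.erase i, (s j i - s i i)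
        = ((∑ j, s i j) + (∑ j, s j i)) - 2 * (n : ℝ) * s i i := by
      intro i; rw [h1 i, h2 i]; ring
    rw [Finset.sum_congr rfl fun i _ => this i, Finset.sum_sub_distrib,
      Finset.sum_add_distrib, hAc, ← Finset.mul_sum, ← hA, ← hD]
    ring
  -- bilinear expansions
  have hBu : ∀ i, G.mulVec (x i) ⬝ᵥ Gt.mulVec xtbar = (n : ℝ)⁻¹ * ∑ j, s i j := by
    intro i
    rw [hxtbar, Matrix.mulVec_smul, dotProduct_smul, mulVec_sum', dotProduct_sum', smul_eq_mul]
    simp [hs]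
  have hBv : ∀ i, G.mulVec xbar ⬝ᵥ Gt.mulVec (xt i) = (n : ℝ)⁻¹ * ∑ j, s j i := by
    intro i
    rw [hxbar, Matrix.mulVec_smul, smul_dotProduct, mulVec_sum', sum_dotProduct', smul_eq_mul]
    simp [hs]
  have hBB : G.mulVec xbar ⬝ᵥ Gt.mulVec xtbar = (n : ℝ)⁻¹ * ((n : ℝ)⁻¹ * A) := by
    rw [hxbar, hxtbar, Matrix.mulVec_smul, Matrix.mulVec_smul, smul_dotProduct,
      dotProduct_smul, mulVec_sum', mulVec_sum', sum_dotProduct', smul_eq_mul, smul_eq_mul, hA]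
    rw [Finset.sum_congr rfl fun i _ => dotProduct_sum' (G.mulVec (x i)) fun j => Gt.mulVec (xt j)]
    simp [hs, Finset.mul_sum]
  have key : ∀ i, G.mulVec (x i - xbar) ⬝ᵥ Gt.mulVec (xt i - xtbar)
      = s i i - (n : ℝ)⁻¹ * (∑ j, s i j) - (n : ℝ)⁻¹ * (∑ j, s j i)
        + (n : ℝ)⁻¹ * ((n : ℝ)⁻¹ * A) := by
    intro i
    rw [Matrix.mulVec_sub, Matrix.mulVec_sub, sub_dotProduct, dotProduct_sub, dotProduct_sub,
      hBu i, hBv i, hBB, ← hs i i]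
    ring
  -- the trace
  have htr : (G * Sn * Gt.transpose).trace
      = ((n : ℝ) - 1)⁻¹ * (D - (n : ℝ)⁻¹ * A) := by
    rw [hSn, Matrix.mul_smul, Matrix.smul_mul, trace_smul, Matrix.mul_sum, Matrix.sum_mul,
      trace_sum, smul_eq_mul]
    rw [Finset.sum_congr rfl fun i _ => trace_conj' G Gt (x i - xbar) (xt i - xtbar)]
    rw [Finset.sum_congr rfl fun i _ => key i]
    rw [Finset.sum_add_distrib, Finset.sum_sub_distrib, Finset.sum_sub_distrib,
      ← Finset.mul_sum, ← Finset.mul_sum, hAc, ← hA, ← hD, Finset.sum_const,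
      Finset.card_univ, Fintype.card_fin, nsmul_eq_mul]
    field_simp
    ring
  rw [hL, htr]
  field_simp
  ring
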